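/- Let F be a field and let a, b, c, α, β, γ, z ∈ F with z ≠ 0, a ≠ 0, α ≠ 0, d := ac + γα⁻¹ ≠ 0 and x := (aβ + bα⁻¹)/d ≠ 0. Then the 2×2 matrix identity [[a, b z⁻¹],[c, a⁻¹]] · [[α, β z⁻¹],[γ, α⁻¹]] = [[a, γ x z⁻¹],[β x⁻¹, a⁻¹]] · [[α, c x z⁻¹],[b x⁻¹, α⁻¹]] holds. -/

import Mathlib

/-- the switching rule used in the Wiener–Hopf type factorization:
`[[a, b z⁻¹],[c, a⁻¹]] · [[α, β z⁻¹],[γ, α⁻¹]]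
  = [[a, γ x z⁻¹],[β x⁻¹, a⁻¹]] · [[α, c x z⁻¹],[b x⁻¹, α⁻¹]]`
with `x = (aβ + bα⁻¹)/(ac + γα⁻¹)`. -/
theorem stmt9 (F : Type*) [Field F] (a b c α β γ z d x : F)
    (hz : z ≠ 0) (ha : a ≠ 0) (hα : α ≠ 0)
    (hd : d = a * c + γ * α⁻¹) (hdne : d ≠ 0)
    (hx : x = (a * β + b * α⁻¹) / d) (hxne : x ≠ 0) :
    (!![a, b * z⁻¹; c, a⁻¹] : Matrix (Fin 2) (Fin 2) F) * !![α, β * z⁻¹; γ, α⁻¹]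
      = !![a, γ * x * z⁻¹; β * x⁻¹, a⁻¹] * !![α, c * x * z⁻¹; b * x⁻¹, α⁻¹] := by
  have hxd : x * d = a * β + b * α⁻¹ := by
    rw [hx, div_mul_cancel₀ _ hdne]
  subst hd
  have hxd' : x * (a * c * α + γ) = a * β * α + b := by
    field_simp at hxd; linear_combination hxd
  ext i j
  fin_cases i <;> fin_cases j <;>
    simp [Matrix.mul_apply, Fin.sum_univ_two]
  · field_simp
  · field_simp
    linear_combination (-1) * hxd'
  · field_simp
    linear_combination hxd'
  · field_simp
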